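/- The sigma function satisfies σ(z + 2πiτ) = −exp(−(z + πiτ))·σ(z) for all z ∈ ℂ. -/

import Mathlib

/-- The nome `q = exp(2πiτ)`. -/
noncomputable def nome (τ : ℂ) : ℂ := Complex.exp (2 * Real.pi * Complex.I * τ)

/-- The Weierstrass-type sigma function
`σ(z) = (e^{z/2} - e^{-z/2}) ∏_{n ≥ 1} (1 - qⁿ eᶻ)(1 - qⁿ e^{-z})/(1 - qⁿ)²`,
where the product over integers `n ≥ 1` is encoded as a product over `n : ℕ`
with exponent `n + 1`. -/
noncomputable def wsigma (τ : ℂ) (z : ℂ) : ℂ :=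
  (Complex.exp (z / 2) - Complex.exp (-z / 2)) *
    ∏' n : ℕ, ((1 - nome τ ^ (n + 1) * Complex.exp z) *
      (1 - nome τ ^ (n + 1) * Complex.exp (-z)) / (1 - nome τ ^ (n + 1)) ^ 2)

open Complex Filter

lemma my_hasProd_zero {f : ℕ → ℂ} {i : ℕ} (h : f i = 0) : HasProd f 0 := by
  have hev : ∀ᶠ s : Finset ℕ in atTop, ∏ b ∈ s, f b = 0 := by
    filter_upwards [Filter.eventually_ge_atTop ({i} : Finset ℕ)] with s hs
    exact Finset.prod_eq_zero (hs (Finset.mem_singleton_self i)) h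
  exact Filter.Tendsto.congr' (hev.mono fun s hs => hs.symm) tendsto_const_nhds

lemma my_multipliable_one_add {u : ℕ → ℂ} (hu : Summable u) :
    Multipliable fun n => 1 + u n := by
  by_cases h : ∃ i, 1 + u i = 0
  · obtain ⟨i, hi⟩ := h
    exact ⟨0, my_hasProd_zero hi⟩
  · push_neg at h
    have hlog : Summable fun n => Complex.log (1 + u n) := by
      have h12 : ∀ᶠ n in atTop, ‖u n‖ ≤ 1 / 2 := by
        have := hu.tendsto_atTop_zero.norm
        simp only [norm_zero] at this
        exact this.eventually_le_const (by norm_num)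
      apply Summable.of_norm_bounded_eventually_nat (g := fun n => 3 / 2 * ‖u n‖)
        (hu.norm.mul_left _)
      filter_upwards [h12] with n hn
      exact Complex.norm_log_one_add_half_le_self hn
    exact Complex.multipliable_of_summable_log hlog

lemma my_summable_geom {q : ℂ} (hq : ‖q‖ < 1) (w : ℂ) :
    Summable fun n : ℕ => q ^ (n + 1) * w := by
  have : Summable fun n : ℕ => q * (q ^ n * w) :=
    ((summable_geometric_of_norm_lt_one hq).mul_right w).mul_left q
  exact this.congr fun n => by ring

lemma my_multA {q : ℂ} (hq : ‖q‖ < 1) (w : ℂ) :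
    Multipliable fun n : ℕ => 1 - q ^ (n + 1) * w := by
  have := my_multipliable_one_add (u := fun n => -(q ^ (n + 1) * w))
    (my_summable_geom hq w).neg
  exact this.congr fun n => by ring

lemma my_bound {x : ℂ} (hx : ‖x‖ ≤ 1 / 2) : ‖((1 - x) ^ 2)⁻¹ - 1‖ ≤ 10 * ‖x‖ := by
  have h2 : (1 : ℝ) / 2 ≤ ‖1 - x‖ := by
    have h := norm_sub_norm_le (1 : ℂ) x
    simp only [norm_one] at h
    linarith
  have hne : (1 : ℂ) - x ≠ 0 := by
    intro h
    rw [h, norm_zero] at h2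
    linarith
  have key : ((1 - x) ^ 2)⁻¹ - 1 = x * (2 - x) * (((1 - x)) ^ 2)⁻¹ := by
    field_simp
    ring
  rw [key, norm_mul, norm_mul, norm_inv, norm_pow]
  have h1 : ‖(2 : ℂ) - x‖ ≤ 5 / 2 := by
    have h := norm_sub_le (2 : ℂ) x
    have : ‖(2 : ℂ)‖ = 2 := by norm_num
    linarith [h, hx, this ▸ h]
  have h3 : (‖1 - x‖ ^ 2)⁻¹ ≤ 4 := by
    rw [inv_le_comm₀ (by positivity) (by norm_num)]
    nlinarith
  have hx0 := norm_nonneg x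
  have h20 : (0:ℝ) ≤ ‖(2:ℂ) - x‖ := norm_nonneg _
  have h30 : (0:ℝ) ≤ (‖1 - x‖ ^ 2)⁻¹ := by positivity
  nlinarith [mul_le_mul h1 h3 h30 (by norm_num : (0:ℝ) ≤ 5/2)]

lemma my_multC {q : ℂ} (hq : ‖q‖ < 1) :
    Multipliable fun n : ℕ => (((1 : ℂ) - q ^ (n + 1)) ^ 2)⁻¹ := by
  have hsum : Summable fun n : ℕ => (((1 : ℂ) - q ^ (n + 1)) ^ 2)⁻¹ - 1 := by
    have h12 : ∀ᶠ n in atTop, ‖q ^ (n + 1)‖ ≤ 1 / 2 := by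
      have ht : Tendsto (fun n : ℕ => ‖q‖ ^ (n + 1)) atTop (nhds 0) :=
        (tendsto_pow_atTop_nhds_zero_of_lt_one (norm_nonneg q) hq).comp
          (tendsto_add_atTop_nat 1)
      have := ht.eventually_le_const (show (0:ℝ) < 1/2 by norm_num)
      filter_upwards [this] with n hn
      rwa [norm_pow]
    apply Summable.of_norm_bounded_eventually_nat (g := fun n => 10 * ‖q ^ (n + 1) * (1:ℂ)‖)
      ((my_summable_geom hq 1).norm.mul_left 10)
    filter_upwards [h12] with n hn
    rw [mul_one]
    exact my_bound hn
  have := my_multipliable_one_add hsum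
  exact this.congr fun n => by ring

lemma my_shift {q : ℂ} (hq : ‖q‖ < 1) (w : ℂ) :
    ∏' n : ℕ, (1 - q ^ (n + 1) * w) = (1 - q * w) * ∏' n : ℕ, (1 - q ^ (n + 1) * (q * w)) := by
  have hm : Multipliable fun n : ℕ => (1 : ℂ) - q ^ (n + 1 + 1) * w :=
    (my_multA hq (q * w)).congr fun n => by ring
  have h := tprod_eq_zero_mul' (f := fun n : ℕ => 1 - q ^ (n + 1) * w) hm
  rw [h]
  congr 1
  · norm_num
  · exact tprod_congr fun n => by ring

theorem wsigma_add_two_pi_I_tau (τ : ℂ) (hτ : 0 < τ.im) :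
    ∀ z : ℂ, wsigma τ (z + 2 * Real.pi * Complex.I * τ) =
      -Complex.exp (-(z + Real.pi * Complex.I * τ)) * wsigma τ z := by
  intro z
  set q : ℂ := nome τ with hqdef
  have hq0 : q ≠ 0 := Complex.exp_ne_zero _
  have hq : ‖q‖ < 1 := by
    rw [hqdef, nome, Complex.norm_exp, Real.exp_lt_one_iff]
    have hre : (2 * (Real.pi : ℂ) * Complex.I * τ).re = -(2 * Real.pi * τ.im) := by
      simp [Complex.mul_re, Complex.mul_im]
    rw [hre]
    have := Real.pi_pos
    nlinarith
  set s : ℂ := Complex.exp (Real.pi * Complex.I * τ) with hsdef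
  have hs0 : s ≠ 0 := Complex.exp_ne_zero _
  have hsq : s * s = q := by
    rw [hsdef, hqdef, nome, ← Complex.exp_add]
    ring_nf
  set E : ℂ := Complex.exp z with hEdef
  have hE0 : E ≠ 0 := Complex.exp_ne_zero _
  set X : ℂ := Complex.exp (z / 2) with hXdef
  have hX0 : X ≠ 0 := Complex.exp_ne_zero _
  have hXX : X * X = E := by rw [hXdef, hEdef, ← Complex.exp_add]; ring_nf
  -- exponential identities
  have he1 : Complex.exp (z + 2 * Real.pi * Complex.I * τ) = E * q := by
    rw [hEdef, hqdef, nome, ← Complex.exp_add]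
  have he2 : Complex.exp (-(z + 2 * Real.pi * Complex.I * τ)) = E⁻¹ * q⁻¹ := by
    rw [hEdef, hqdef, nome, ← Complex.exp_neg, ← Complex.exp_neg, ← Complex.exp_add]
    congr 1
    ring
  have he3 : Complex.exp ((z + 2 * Real.pi * Complex.I * τ) / 2) = X * s := by
    rw [hXdef, hsdef, ← Complex.exp_add]
    congr 1
    ring
  have he4 : Complex.exp (-(z + 2 * Real.pi * Complex.I * τ) / 2) = X⁻¹ * s⁻¹ := by
    rw [hXdef, hsdef, ← Complex.exp_neg, ← Complex.exp_neg, ← Complex.exp_add]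
    congr 1
    ring
  have he5 : Complex.exp (-z) = E⁻¹ := by rw [hEdef]; exact Complex.exp_neg z
  have he6 : Complex.exp (-z / 2) = X⁻¹ := by
    rw [hXdef, ← Complex.exp_neg]
    congr 1
    ring
  have he7 : Complex.exp (-(z + Real.pi * Complex.I * τ)) = E⁻¹ * s⁻¹ := by
    rw [hEdef, hsdef, ← Complex.exp_neg, ← Complex.exp_neg, ← Complex.exp_add]
    congr 1
    ring
  -- multipliabilities
  have mA' : Multipliable fun n : ℕ => (1 : ℂ) - q ^ (n + 1) * (E * q) := my_multA hq _
  have mB : Multipliable fun n : ℕ => (1 : ℂ) - q ^ (n + 1) * E⁻¹ := my_multA hq _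
  have mB' : Multipliable fun n : ℕ => (1 : ℂ) - q ^ n * E⁻¹ := by
    have := my_multipliable_one_add (u := fun n : ℕ => -(q ^ n * E⁻¹))
      (((summable_geometric_of_norm_lt_one hq).mul_right E⁻¹).neg)
    exact this.congr fun n => by ring
  have mA : Multipliable fun n : ℕ => (1 : ℂ) - q ^ (n + 1) * E := my_multA hq _
  have mC : Multipliable fun n : ℕ => (((1 : ℂ) - q ^ (n + 1)) ^ 2)⁻¹ := my_multC hq
  -- split the two tprods
  have split : ∀ (f g : ℕ → ℂ), Multipliable f → Multipliable g →
      (∏' n : ℕ, f n * g n * (((1 : ℂ) - q ^ (n + 1)) ^ 2)⁻¹) =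
        (∏' n, f n) * (∏' n, g n) * (∏' n, (((1 : ℂ) - q ^ (n + 1)) ^ 2)⁻¹) := by
    intro f g hf hg
    rw [Multipliable.tprod_mul (hf.mul hg) mC, Multipliable.tprod_mul hf hg]
  -- rewrite both sides
  unfold wsigma
  rw [← hqdef]
  rw [he1, he2, he3, he4, he5, he6]
  have lhs_prod : (∏' n : ℕ, ((1 - q ^ (n + 1) * (E * q)) * (1 - q ^ (n + 1) * (E⁻¹ * q⁻¹)) /
      (1 - q ^ (n + 1)) ^ 2)) =
      (∏' n : ℕ, (1 - q ^ (n + 1) * (E * q))) * (∏' n : ℕ, (1 - q ^ n * E⁻¹)) *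
        (∏' n : ℕ, (((1 : ℂ) - q ^ (n + 1)) ^ 2)⁻¹) := by
    rw [show (fun n : ℕ => (1 - q ^ (n + 1) * (E * q)) * (1 - q ^ (n + 1) * (E⁻¹ * q⁻¹)) /
        (1 - q ^ (n + 1)) ^ 2) = fun n : ℕ =>
        (1 - q ^ (n + 1) * (E * q)) * (1 - q ^ n * E⁻¹) * (((1 : ℂ) - q ^ (n + 1)) ^ 2)⁻¹ from
      funext fun n => by
        rw [div_eq_mul_inv]
        congr 3
        rw [pow_succ]
        field_simp]
    exact split _ _ mA' mB'
  have rhs_prod : (∏' n : ℕ, ((1 - q ^ (n + 1) * E) * (1 - q ^ (n + 1) * E⁻¹) /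
      (1 - q ^ (n + 1)) ^ 2)) =
      (∏' n : ℕ, (1 - q ^ (n + 1) * E)) * (∏' n : ℕ, (1 - q ^ (n + 1) * E⁻¹)) *
        (∏' n : ℕ, (((1 : ℂ) - q ^ (n + 1)) ^ 2)⁻¹) := by
    rw [show (fun n : ℕ => (1 - q ^ (n + 1) * E) * (1 - q ^ (n + 1) * E⁻¹) /
        (1 - q ^ (n + 1)) ^ 2) = fun n : ℕ =>
        (1 - q ^ (n + 1) * E) * (1 - q ^ (n + 1) * E⁻¹) * (((1 : ℂ) - q ^ (n + 1)) ^ 2)⁻¹ from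
      funext fun n => by rw [div_eq_mul_inv]]
    exact split _ _ mA mB
  rw [lhs_prod, he7, rhs_prod]
  -- shift identities
  have shiftA : (∏' n : ℕ, ((1 : ℂ) - q ^ (n + 1) * E)) =
      (1 - q * E) * ∏' n : ℕ, (1 - q ^ (n + 1) * (E * q)) := by
    rw [my_shift hq E]
    congr 1
    exact tprod_congr fun n => by ring_nf
  have shiftB : (∏' n : ℕ, ((1 : ℂ) - q ^ n * E⁻¹)) =
      (1 - E⁻¹) * ∏' n : ℕ, (1 - q ^ (n + 1) * E⁻¹) := by
    have h := tprod_eq_zero_mul' (f := fun n : ℕ => (1:ℂ) - q ^ n * E⁻¹) mB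
    simpa using h
  rw [shiftA, shiftB, ← hXdef, show q = s * s from hsq.symm,
    show E = X * X from hXX.symm]
  field_simp
  ring
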